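/- For a Werner state ρ_W = (1/(d³−d))[(d−f) I + (df−1) F] with −1 ≤ f ≤ 1/d, the trace norm of its realignment equals 2/d − f. In particular at f = −1 it equals 1 + 2/d. -/

import Mathlib

open Matrix
open scoped ComplexOrder

/-- The realignment map on matrices on `ℂ^d ⊗ ℂ^d`:
`R(X)_{(i,j),(k,l)} = X_{(i,k),(j,l)}`. -/
def realign (d : ℕ) (X : Matrix (Fin d × Fin d) (Fin d × Fin d) ℂ) :
    Matrix (Fin d × Fin d) (Fin d × Fin d) ℂ :=
  Matrix.of fun p q => X (p.1, q.1) (p.2, q.2)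

/-- The unnormalized maximally entangled vector `|u⟩ = ∑ i, |i⟩ ⊗ |i⟩`. -/
def uVec (d : ℕ) : Fin d × Fin d → ℂ := fun p => if p.1 = p.2 then 1 else 0

/-- The rank-one operator `|u⟩⟨u| = ∑ i j, |i⟩⟨j| ⊗ |i⟩⟨j|`. -/
def uuMat (d : ℕ) : Matrix (Fin d × Fin d) (Fin d × Fin d) ℂ :=
  Matrix.vecMulVec (uVec d) (star (uVec d))

/-- The swap (flip) operator `F = ∑ i j, |i⟩⟨j| ⊗ |j⟩⟨i|`. -/
def swapF (d : ℕ) : Matrix (Fin d × Fin d) (Fin d × Fin d) ℂ :=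
  Matrix.of fun p q => if p.1 = q.2 ∧ p.2 = q.1 then 1 else 0

/-- The positive semidefinite square root of a positive semidefinite matrix
(the former Mathlib `Matrix.PosSemidef.sqrt`, spelled out). -/
noncomputable def posSemidefSqrt {n : Type*} [Fintype n] [DecidableEq n]
    {A : Matrix n n ℂ} (hA : A.PosSemidef) : Matrix n n ℂ :=
  (hA.1.eigenvectorUnitary : Matrix n n ℂ) * diagonal (((↑) : ℝ → ℂ) ∘ (√·) ∘ hA.1.eigenvalues) *
    (star hA.1.eigenvectorUnitary : Matrix n n ℂ)

/-- The trace norm `‖X‖₁ = Tr √(X Xᴴ)` of a (possibly rectangular) complex matrix. -/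
noncomputable def traceNorm {m n : Type*} [Fintype m] [Fintype n] [DecidableEq m]
    (X : Matrix m n ℂ) : ℝ :=
  (posSemidefSqrt (Matrix.posSemidef_self_mul_conjTranspose X)).trace.re

/-- The `d ⊗ d` Werner state `ρ_W = (1/(d³−d)) [(d−f) I + (df−1) F]`. -/
noncomputable def wernerState (d : ℕ) (f : ℝ) :
    Matrix (Fin d × Fin d) (Fin d × Fin d) ℂ :=
  (((d : ℂ) ^ 3 - (d : ℂ))⁻¹) •
    ((((d : ℝ) - f : ℝ) : ℂ) • 1 + (((d : ℝ) * f - 1 : ℝ) : ℂ) • swapF d)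

open scoped MatrixOrder in
lemma posSemidefSqrt_eq_cfc {n : Type*} [Fintype n] [DecidableEq n]
    {A : Matrix n n ℂ} (hA : A.PosSemidef) : posSemidefSqrt hA = CFC.sqrt A := by
  rw [CFC.sqrt_eq_cfc, cfc_nnreal_eq_real _ A, hA.1.cfc_eq]
  simp only [IsHermitian.cfc, posSemidefSqrt, Unitary.conjStarAlgAut_apply]
  congr 3
  ext i
  simp [Real.coe_toNNReal', hA.eigenvalues_nonneg i]

open scoped MatrixOrder in
lemma PosSemidef_eq_sqrt_of_sq_eq {n : Type*} [Fintype n] [DecidableEq n]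
    {A B : Matrix n n ℂ} (hB : B.PosSemidef) (hA : A.PosSemidef) (h : B ^ 2 = A) :
    B = posSemidefSqrt hA := by
  rw [posSemidefSqrt_eq_cfc, eq_comm]
  exact CFC.sqrt_unique (by rw [← sq, h]) hB.nonneg

lemma uuMat_apply (d : ℕ) (p q : Fin d × Fin d) :
    uuMat d p q = if p.1 = p.2 ∧ q.1 = q.2 then 1 else 0 := by
  simp [uuMat, uVec, vecMulVec_apply, ite_and, apply_ite star]
  split <;> split <;> simp

lemma uu_mul_uu (d : ℕ) : uuMat d * uuMat d = (d : ℂ) • uuMat d := by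
  ext p q
  simp only [mul_apply, uuMat_apply, Matrix.smul_apply, smul_eq_mul, Fintype.sum_prod_type]
  simp [ite_and, Finset.sum_ite_eq, apply_ite, Finset.mul_sum]
  aesop

lemma F_mul_F (d : ℕ) : swapF d * swapF d = 1 := by
  ext p q
  simp only [mul_apply, swapF, of_apply, one_apply, Fintype.sum_prod_type]
  simp [ite_and, Finset.sum_ite_eq, Prod.ext_iff]

lemma F_mul_uu (d : ℕ) : swapF d * uuMat d = uuMat d := by
  ext p q
  simp only [mul_apply, swapF, of_apply, uuMat_apply, Fintype.sum_prod_type]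
  simp [ite_and, Finset.sum_ite_eq, eq_comm]
  split <;> split <;> simp_all

lemma uu_mul_F (d : ℕ) : uuMat d * swapF d = uuMat d := by
  ext p q
  simp only [mul_apply, swapF, of_apply, uuMat_apply, Fintype.sum_prod_type]
  simp [ite_and, Finset.sum_ite_eq, eq_comm]

lemma trace_uu (d : ℕ) : (uuMat d).trace = d := by
  have : (uuMat d).trace = ∑ p : Fin d × Fin d, (if p.1 = p.2 then (1:ℂ) else 0) := by
    simp [trace, diag, uuMat_apply]
  rw [this, Fintype.sum_prod_type]
  simp [Finset.sum_ite_eq']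

lemma uu_herm (d : ℕ) : (uuMat d)ᴴ = uuMat d := by
  ext p q
  simp [conjTranspose_apply, uuMat_apply, apply_ite (star : ℂ → ℂ), and_comm]

lemma F_herm (d : ℕ) : (swapF d)ᴴ = swapF d := by
  ext p q
  simp [conjTranspose_apply, swapF, apply_ite (star : ℂ → ℂ), and_comm, eq_comm]

lemma uu_mulVec (d : ℕ) (x : Fin d × Fin d → ℂ) :
    uuMat d *ᵥ x = (star (uVec d) ⬝ᵥ x) • uVec d := by
  ext i
  simp only [uuMat, mulVec, dotProduct, vecMulVec_apply, Pi.smul_apply, smul_eq_mul]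
  rw [Finset.sum_mul]
  exact Finset.sum_congr rfl fun j _ => by ring

lemma psd_comb (d : ℕ) (r s : ℝ) (hr : 0 ≤ r) (hs : 0 ≤ s) :
    PosSemidef (((r:ℝ):ℂ) • (1 : Matrix (Fin d × Fin d) (Fin d × Fin d) ℂ)
      + ((s:ℝ):ℂ) • uuMat d) := by
  refine PosSemidef.of_dotProduct_mulVec_nonneg ?_ ?_
  · unfold Matrix.IsHermitian
    rw [conjTranspose_add, conjTranspose_smul, conjTranspose_smul, conjTranspose_one, uu_herm]
    simp [Complex.star_def, Complex.conj_ofReal]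
  · intro x
    rw [add_mulVec, smul_mulVec, smul_mulVec, one_mulVec, dotProduct_add,
      dotProduct_smul, dotProduct_smul, uu_mulVec, dotProduct_smul]
    have hx : star x ⬝ᵥ uVec d = star (star (uVec d) ⬝ᵥ x) := by
      rw [star_dotProduct]
    rw [hx]
    refine add_nonneg ?_ ?_
    · exact smul_nonneg (by exact_mod_cast hr) (dotProduct_star_self_nonneg x)
    · refine smul_nonneg (by exact_mod_cast hs) ?_
      rw [smul_eq_mul, mul_comm]
      exact star_mul_self_nonneg _

set_option maxHeartbeats 1000000 in
/-- For a Werner state with `−1 ≤ f ≤ 1/d`, the trace norm of its realignment equals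
`2/d − f`; in particular at `f = −1` it equals `1 + 2/d`. -/
theorem traceNorm_realign_wernerState (d : ℕ) (hd : 2 ≤ d) (f : ℝ)
    (hf1 : -1 ≤ f) (hf2 : f ≤ 1 / d) :
    traceNorm (realign d (wernerState d f)) = 2 / d - f ∧
    (f = -1 → traceNorm (realign d (wernerState d f)) = 1 + 2 / d) := by
  have hD2 : (2:ℝ) ≤ (d:ℝ) := by exact_mod_cast hd
  have hD0 : (0:ℝ) < (d:ℝ) := by linarith
  have hN : (0:ℝ) < (d:ℝ)^3 - (d:ℝ) := by
    have h : (d:ℝ)^3 - (d:ℝ) = (d:ℝ)*((d:ℝ)-1)*((d:ℝ)+1) := by ring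
    rw [h]
    exact mul_pos (mul_pos hD0 (by linarith)) (by linarith)
  have hNne : ((d:ℝ)^3 - (d:ℝ)) ≠ 0 := hN.ne'
  have hdC : (d:ℂ) ≠ 0 := by
    exact_mod_cast hD0.ne'
  have hNCne : ((d:ℂ)^3 - (d:ℂ)) ≠ 0 := by
    have h : ((d:ℂ)^3 - (d:ℂ)) = (((d:ℝ)^3 - (d:ℝ) : ℝ) : ℂ) := by push_cast; ring
    rw [h]
    exact_mod_cast hNne
  have h2R : (d:ℝ)^2 - 1 ≠ 0 := by nlinarith
  have h2C : (d:ℂ)^2 - 1 ≠ 0 := by exact_mod_cast h2R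
  have hM : realign d (wernerState d f)
      = ((((d:ℝ) - f) / ((d:ℝ)^3 - (d:ℝ)) : ℝ) : ℂ) • uuMat d
        + ((((d:ℝ) * f - 1) / ((d:ℝ)^3 - (d:ℝ)) : ℝ) : ℂ) • swapF d := by
    ext p q
    simp only [realign, wernerState, of_apply, Matrix.add_apply, Matrix.smul_apply, one_apply, swapF,
      uuMat_apply, smul_eq_mul, Prod.mk.injEq,
      show (p.2 = q.1) ↔ (q.1 = p.2) from eq_comm]
    push_cast
    split_ifs <;> field_simp [hNCne, hdC] <;> try ring
  have hfd : f * (d:ℝ) ≤ 1 := (le_div_iff₀ hD0).mp hf2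
  have hbnp : ((d:ℝ) * f - 1) / ((d:ℝ)^3 - (d:ℝ)) ≤ 0 :=
    div_nonpos_of_nonpos_of_nonneg (by nlinarith) hN.le
  have hr : 0 ≤ -(((d:ℝ) * f - 1) / ((d:ℝ)^3 - (d:ℝ))) := by linarith
  have hkey : 0 ≤ ((d:ℝ)^3 - (d:ℝ)) + ((d:ℝ)*f-1)*(d:ℝ) := by
    nlinarith [mul_nonneg (mul_nonneg hD0.le (by linarith : (0:ℝ) ≤ (d:ℝ)-2)) (by linarith : (0:ℝ) ≤ (d:ℝ)+1),
      mul_nonneg (mul_nonneg hD0.le hD0.le) (by linarith : (0:ℝ) ≤ f+1)]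
  have hsval : 1/(d:ℝ)^2 + (((d:ℝ) * f - 1) / ((d:ℝ)^3 - (d:ℝ)))/(d:ℝ)
      = (((d:ℝ)^3 - (d:ℝ)) + ((d:ℝ)*f-1)*(d:ℝ)) / ((d:ℝ)^2 * ((d:ℝ)^3 - (d:ℝ))) := by
    field_simp
  have hs : 0 ≤ 1/(d:ℝ)^2 + (((d:ℝ) * f - 1) / ((d:ℝ)^3 - (d:ℝ)))/(d:ℝ) := by
    rw [hsval]; positivity
  have hSpsd := psd_comb d _ _ hr hs
  have hMherm : (((((d:ℝ) - f) / ((d:ℝ)^3 - (d:ℝ)) : ℝ) : ℂ) • uuMat d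
        + ((((d:ℝ) * f - 1) / ((d:ℝ)^3 - (d:ℝ)) : ℝ) : ℂ) • swapF d)ᴴ
      = ((((d:ℝ) - f) / ((d:ℝ)^3 - (d:ℝ)) : ℝ) : ℂ) • uuMat d
        + ((((d:ℝ) * f - 1) / ((d:ℝ)^3 - (d:ℝ)) : ℝ) : ℂ) • swapF d := by
    rw [conjTranspose_add, conjTranspose_smul, conjTranspose_smul, uu_herm, F_herm]
    simp [Complex.star_def, Complex.conj_ofReal]
  have hsq : (((-(((d:ℝ) * f - 1) / ((d:ℝ)^3 - (d:ℝ))) : ℝ):ℂ)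
          • (1 : Matrix (Fin d × Fin d) (Fin d × Fin d) ℂ)
        + ((1/(d:ℝ)^2 + (((d:ℝ) * f - 1) / ((d:ℝ)^3 - (d:ℝ)))/(d:ℝ) : ℝ):ℂ) • uuMat d) ^ 2
      = (((((d:ℝ) - f) / ((d:ℝ)^3 - (d:ℝ)) : ℝ) : ℂ) • uuMat d
        + ((((d:ℝ) * f - 1) / ((d:ℝ)^3 - (d:ℝ)) : ℝ) : ℂ) • swapF d)
        * (((((d:ℝ) - f) / ((d:ℝ)^3 - (d:ℝ)) : ℝ) : ℂ) • uuMat d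
        + ((((d:ℝ) * f - 1) / ((d:ℝ)^3 - (d:ℝ)) : ℝ) : ℂ) • swapF d)ᴴ := by
    rw [hMherm, sq]
    simp only [add_mul, mul_add, smul_mul_assoc, mul_smul_comm, uu_mul_uu, F_mul_F,
      F_mul_uu, uu_mul_F, mul_one, one_mul, smul_smul]
    match_scalars <;> push_cast <;> field_simp [hNCne, hdC] <;> ring
  have htn : traceNorm (realign d (wernerState d f))
      = ((((-(((d:ℝ) * f - 1) / ((d:ℝ)^3 - (d:ℝ))) : ℝ):ℂ)
          • (1 : Matrix (Fin d × Fin d) (Fin d × Fin d) ℂ)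
        + ((1/(d:ℝ)^2 + (((d:ℝ) * f - 1) / ((d:ℝ)^3 - (d:ℝ)))/(d:ℝ) : ℝ):ℂ)
          • uuMat d)).trace.re := by
    rw [hM]
    unfold traceNorm
    rw [← (PosSemidef_eq_sqrt_of_sq_eq hSpsd (posSemidef_self_mul_conjTranspose _) hsq)]
  have htr : ((((-(((d:ℝ) * f - 1) / ((d:ℝ)^3 - (d:ℝ))) : ℝ):ℂ)
          • (1 : Matrix (Fin d × Fin d) (Fin d × Fin d) ℂ)
        + ((1/(d:ℝ)^2 + (((d:ℝ) * f - 1) / ((d:ℝ)^3 - (d:ℝ)))/(d:ℝ) : ℝ):ℂ)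
          • uuMat d)).trace
      = (((-(((d:ℝ) * f - 1) / ((d:ℝ)^3 - (d:ℝ)))) * ((d:ℝ)*(d:ℝ))
          + (1/(d:ℝ)^2 + (((d:ℝ) * f - 1) / ((d:ℝ)^3 - (d:ℝ)))/(d:ℝ)) * (d:ℝ) : ℝ) : ℂ) := by
    rw [trace_add, trace_smul, trace_smul, trace_one, trace_uu]
    simp
    try push_cast
    try ring
  have hfinal : (-(((d:ℝ) * f - 1) / ((d:ℝ)^3 - (d:ℝ)))) * ((d:ℝ)*(d:ℝ))
          + (1/(d:ℝ)^2 + (((d:ℝ) * f - 1) / ((d:ℝ)^3 - (d:ℝ)))/(d:ℝ)) * (d:ℝ)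
      = 2 / (d:ℝ) - f := by
    field_simp
    ring
  have h1 : traceNorm (realign d (wernerState d f)) = 2 / (d:ℝ) - f := by
    rw [htn, htr, Complex.ofReal_re, hfinal]
  exact ⟨h1, fun hf => by rw [h1, hf]; ring⟩
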